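/- Let ρ be a pure 4-qubit state that is a product across a 1-versus-3 bipartition, i.e. (up to the corresponding reordering of tensor factors) ρ = |φ⟩⟨φ| ⊗ |χ⟩⟨χ| with φ ∈ ℂ² and χ ∈ (ℂ²)^{⊗3} unit vectors. Then for every pair A = {j,l} ⊂ {1,2,3,4} and every k ∈ {1,…,9}, the A-matricization of the full correlation tensor T_{i₁i₂i₃i₄} = tr(ρ (σ_{i₁} ⊗ σ_{i₂} ⊗ σ_{i₃} ⊗ σ_{i₄})) satisfies ‖T_{\underline{A}}‖_k ≤ 2√k if k ≤ 3 and ‖T_{\underline{A}}‖_k ≤ 2√3 if k ≥ 4. -/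

import Mathlib

open Matrix BigOperators ComplexOrder

noncomputable section

/-- The three standard Pauli matrices. -/
def pauli : Fin 3 → Matrix (Fin 2) (Fin 2) ℂ :=
  ![!![0, 1; 1, 0], !![0, -Complex.I; Complex.I, 0], !![1, 0; 0, -1]]

/-- The tensor (Kronecker) product of `n` local operators, acting on
`(ℂ²)^{⊗n}` with the Hilbert space indexed by functions `Fin n → Fin 2`. -/
def tensorOp {n : ℕ} (A : Fin n → Matrix (Fin 2) (Fin 2) ℂ) :
    Matrix (Fin n → Fin 2) (Fin n → Fin 2) ℂ :=
  fun r c => ∏ j, A j (r j) (c j)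

/-- The full correlation tensor of an `n`-qubit state:
`T_{i₁⋯i_n} = tr(ρ (σ_{i₁} ⊗ ⋯ ⊗ σ_{i_n}))`. -/
def corr {n : ℕ} (ρ : Matrix (Fin n → Fin 2) (Fin n → Fin 2) ℂ)
    (f : Fin n → Fin 3) : ℝ :=
  ((ρ * tensorOp fun j => pauli (f j)).trace).re

/-- The `A`-matricization of an `n`-index tensor `v`: the real matrix whose row
index collects the indices in `A` and whose column index collects the remaining
indices. -/
def matricize {n m : ℕ} (A : Finset (Fin n)) (v : (Fin n → Fin m) → ℝ) :
    Matrix ({j // j ∈ A} → Fin m) ({j // j ∉ A} → Fin m) ℝ :=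
  fun r c => v fun j => if h : j ∈ A then r ⟨j, h⟩ else c ⟨j, h⟩

/-- The singular values of a real matrix `M`: the square roots of the
eigenvalues of `MᵀM = MᴴM`. -/
def singVals {I J : Type*} [Fintype I] [Fintype J] [DecidableEq J]
    (M : Matrix I J ℝ) : J → ℝ :=
  fun j => Real.sqrt ((Matrix.posSemidef_conjTranspose_mul_self M).1.eigenvalues j)

/-- The Ky Fan `k` norm: the maximum, over sets of `k` of the singular values,
of their sum — equivalently, the sum of the `k` largest singular values. -/
def kyFanNorm {I J : Type*} [Fintype I] [Fintype J] [DecidableEq J]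
    (k : ℕ) (M : Matrix I J ℝ) : ℝ :=
  (Finset.univ : Finset (Finset J)).sup' ⟨∅, Finset.mem_univ ∅⟩
    fun s => if s.card = k then ∑ j ∈ s, singVals M j else 0

/-- The trace norm: the sum of all singular values. -/
def traceNorm {I J : Type*} [Fintype I] [Fintype J] [DecidableEq J]
    (M : Matrix I J ℝ) : ℝ :=
  ∑ j, singVals M j

/-! ### Auxiliary lemmas -/

set_option maxHeartbeats 4000000

lemma aux_pauli_conj (i : Fin 3) (x y : Fin 2) :
    (starRingEnd ℂ) (pauli i x y) = pauli i y x := by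
  fin_cases i <;> fin_cases x <;> fin_cases y <;> simp [pauli]

def auxE3 (m : ℕ) : (Fin m × Fin m × Fin m) ≃ (Fin 3 → Fin m) where
  toFun p := ![p.1, p.2.1, p.2.2]
  invFun v := (v 0, v 1, v 2)
  left_inv p := rfl
  right_inv v := by
    funext i; fin_cases i <;> simp

lemma aux_sum_fun3 {m : ℕ} {M : Type*} [AddCommMonoid M] (f : (Fin 3 → Fin m) → M) :
    ∑ v, f v = ∑ a, ∑ b, ∑ c, f ![a, b, c] := by
  rw [← Fintype.sum_equiv (auxE3 m) (fun p => f (auxE3 m p)) f (fun p => rfl)]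
  rw [Fintype.sum_prod_type]
  simp only [Fintype.sum_prod_type]
  rfl

lemma aux_prod_split {M : Type*} [CommMonoid M] (j : Fin 4) (h : Fin 4 → M) :
    ∏ m, h m = h j * ∏ l : {l // l ≠ j}, h l.1 := by
  rw [Finset.prod_eq_mul_prod_sdiff_singleton_of_mem (Finset.mem_univ j)]
  congr 1
  exact Finset.prod_subtype (Finset.univ \ {j}) (fun x => by simp) h

lemma aux_sum_split_fac {β : Type*} {R : Type*} [CommSemiring R] [Fintype β]
    (j : Fin 4) (F : (Fin 4 → β) → R)
    (G : β → R) (H : ({l // l ≠ j} → β) → R)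
    (hF : ∀ r, F r = G (r j) * H (fun l => r l.1)) :
    ∑ r, F r = (∑ x, G x) * (∑ u, H u) := by
  rw [Finset.sum_mul_sum, ← Fintype.sum_prod_type']
  exact Fintype.sum_equiv (Equiv.funSplitAt j β) F (fun p => G p.1 * H p.2) hF

lemma aux_trace_eq_sum_eigenvalues {n : Type*} [Fintype n] [DecidableEq n]
    {A : Matrix n n ℝ} (hA : A.IsHermitian) : A.trace = ∑ i, hA.eigenvalues i := by
  rw [hA.trace_eq_sum_eigenvalues]
  simp

lemma aux_key2 (w : Fin 2 → ℂ) (h : ∑ x, Complex.normSq (w x) = 1) :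
    ∑ i : Fin 3, (∑ x, ∑ y, w x * (starRingEnd ℂ) (w y) * pauli i y x).re ^ 2 = 1 := by
  simp only [Fin.sum_univ_three, Fin.sum_univ_two, Complex.normSq_apply] at h ⊢
  simp only [pauli, Matrix.cons_val_zero, Matrix.cons_val_one, Matrix.head_cons,
    Matrix.cons_val_two, Matrix.tail_cons, Matrix.cons_val', Matrix.head_fin_const,
    Matrix.empty_val', Matrix.cons_val_fin_one, Matrix.of_apply]
  simp only [Complex.add_re, Complex.mul_re, Complex.mul_im, Complex.conj_re, Complex.conj_im,
    Complex.I_re, Complex.I_im, Complex.neg_re, Complex.neg_im, Complex.one_re, Complex.one_im,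
    Complex.zero_re, Complex.zero_im]
  nlinarith [h, sq_nonneg ((w 0).re^2 + (w 0).im^2 + (w 1).re^2 + (w 1).im^2)]

lemma aux_key8 (z : Fin 2 → Fin 2 → Fin 2 → ℂ)
    (h : ∑ a, ∑ b, ∑ c, Complex.normSq (z a b c) = 1) :
    ∑ g1 : Fin 3, ∑ g2 : Fin 3, ∑ g3 : Fin 3,
      (∑ a, ∑ b, ∑ c, ∑ a', ∑ b', ∑ c',
        z a b c * (starRingEnd ℂ) (z a' b' c') *
          (pauli g1 a' a * pauli g2 b' b * pauli g3 c' c)).re ^ 2 ≤ 4 := by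
  have key : ∑ g1 : Fin 3, ∑ g2 : Fin 3, ∑ g3 : Fin 3,
      (∑ a, ∑ b, ∑ c, ∑ a', ∑ b', ∑ c',
        z a b c * (starRingEnd ℂ) (z a' b' c') *
          (pauli g1 a' a * pauli g2 b' b * pauli g3 c' c)).re ^ 2
      = 4 * (∑ a, ∑ b, ∑ c, Complex.normSq (z a b c)) ^ 2 -
        ∑ i : Fin 3,
          ((∑ a, ∑ a', ∑ b, ∑ c, z a b c * (starRingEnd ℂ) (z a' b c) * pauli i a' a).re ^ 2 +
           (∑ b, ∑ b', ∑ a, ∑ c, z a b c * (starRingEnd ℂ) (z a b' c) * pauli i b' b).re ^ 2 +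
           (∑ c, ∑ c', ∑ a, ∑ b, z a b c * (starRingEnd ℂ) (z a b c') * pauli i c' c).re ^ 2) := by
    simp only [Fin.sum_univ_three, Fin.sum_univ_two, Complex.normSq_apply]
    simp only [pauli, Matrix.cons_val_zero, Matrix.cons_val_one, Matrix.head_cons,
      Matrix.cons_val_two, Matrix.tail_cons, Matrix.cons_val', Matrix.head_fin_const,
      Matrix.empty_val', Matrix.cons_val_fin_one, Matrix.of_apply,
      mul_zero, zero_mul, mul_one, one_mul, add_zero, zero_add, mul_neg, neg_mul, neg_neg,
      neg_zero]
    simp only [Complex.add_re, Complex.mul_re, Complex.mul_im, Complex.add_im,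
      Complex.conj_re, Complex.conj_im, Complex.I_re, Complex.I_im,
      Complex.neg_re, Complex.neg_im, Complex.one_re, Complex.one_im,
      Complex.zero_re, Complex.zero_im,
      mul_zero, zero_mul, mul_one, one_mul, add_zero, zero_add, sub_zero, zero_sub,
      mul_neg, neg_mul, neg_neg, neg_zero]
    ring
  rw [key, h]
  have h2 : (0:ℝ) ≤ ∑ i : Fin 3,
      ((∑ a, ∑ a', ∑ b, ∑ c, z a b c * (starRingEnd ℂ) (z a' b c) * pauli i a' a).re ^ 2 +
       (∑ b, ∑ b', ∑ a, ∑ c, z a b c * (starRingEnd ℂ) (z a b' c) * pauli i b' b).re ^ 2 +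
       (∑ c, ∑ c', ∑ a, ∑ b, z a b c * (starRingEnd ℂ) (z a b c') * pauli i c' c).re ^ 2) :=
    Finset.sum_nonneg fun i _ => by positivity
  linarith

lemma aux_key8' (χ₀ : (Fin 3 → Fin 2) → ℂ) (h : ∑ v, Complex.normSq (χ₀ v) = 1) :
    ∑ g : Fin 3 → Fin 3,
      (∑ r, ∑ c, χ₀ r * (starRingEnd ℂ) (χ₀ c) * ∏ t, pauli (g t) (c t) (r t)).re ^ 2 ≤ 4 := by
  have hh : ∑ a, ∑ b, ∑ c, Complex.normSq (χ₀ ![a, b, c]) = 1 := by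
    rw [← aux_sum_fun3 (fun v => Complex.normSq (χ₀ v))]; exact h
  have := aux_key8 (fun a b c => χ₀ ![a, b, c]) hh
  calc ∑ g : Fin 3 → Fin 3,
      (∑ r, ∑ c, χ₀ r * (starRingEnd ℂ) (χ₀ c) * ∏ t, pauli (g t) (c t) (r t)).re ^ 2
      = ∑ g1 : Fin 3, ∑ g2 : Fin 3, ∑ g3 : Fin 3,
      (∑ a, ∑ b, ∑ c, ∑ a', ∑ b', ∑ c',
        χ₀ ![a,b,c] * (starRingEnd ℂ) (χ₀ ![a',b',c']) *
          (pauli g1 a' a * pauli g2 b' b * pauli g3 c' c)).re ^ 2 := by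
        rw [aux_sum_fun3 (fun g => (∑ r, ∑ c, χ₀ r * (starRingEnd ℂ) (χ₀ c) *
          ∏ t, pauli (g t) (c t) (r t)).re ^ 2)]
        refine Finset.sum_congr rfl fun g1 _ => Finset.sum_congr rfl fun g2 _ =>
          Finset.sum_congr rfl fun g3 _ => ?_
        congr 1
        rw [aux_sum_fun3 (fun r => ∑ c, χ₀ r * (starRingEnd ℂ) (χ₀ c) *
          ∏ t, pauli (![g1,g2,g3] t) (c t) (r t))]
        refine congrArg Complex.re (Finset.sum_congr rfl fun a _ => Finset.sum_congr rfl
          fun b _ => Finset.sum_congr rfl fun c _ => ?_)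
        rw [aux_sum_fun3 (fun w => χ₀ ![a,b,c] * (starRingEnd ℂ) (χ₀ w) *
          ∏ t, pauli (![g1,g2,g3] t) (w t) (![a,b,c] t))]
        refine Finset.sum_congr rfl fun a' _ => Finset.sum_congr rfl
          fun b' _ => Finset.sum_congr rfl fun c' _ => ?_
        congr 1
        rw [Fin.prod_univ_three]
        simp
      _ ≤ 4 := this

lemma aux_corr_fac (j : Fin 4) (φ : Fin 2 → ℂ) (χ : ({l // l ≠ j} → Fin 2) → ℂ)
    (Ψ : (Fin 4 → Fin 2) → ℂ)
    (hprod : ∀ r, Ψ r = φ (r j) * χ (fun l => r l.1))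
    (ρ : Matrix (Fin 4 → Fin 2) (Fin 4 → Fin 2) ℂ)
    (hρ : ρ = Matrix.vecMulVec Ψ (star Ψ)) (f : Fin 4 → Fin 3) :
    corr ρ f = ((∑ x, ∑ y, φ x * (starRingEnd ℂ) (φ y) * pauli (f j) y x) *
      (∑ r, ∑ c, χ r * (starRingEnd ℂ) (χ c) *
        ∏ l : {l // l ≠ j}, pauli (f l.1) (c l) (r l))).re := by
  unfold corr
  congr 1
  rw [hρ]
  have htr : (vecMulVec Ψ (star Ψ) * tensorOp fun m => pauli (f m)).trace
      = ∑ r, ∑ c, Ψ r * (starRingEnd ℂ) (Ψ c) * ∏ m, pauli (f m) (c m) (r m) := by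
    simp only [Matrix.trace, Matrix.diag, Matrix.mul_apply, Matrix.vecMulVec_apply, tensorOp,
      Pi.star_apply, Complex.star_def]
  rw [htr]
  rw [aux_sum_split_fac j _ (fun x => ∑ y, φ x * (starRingEnd ℂ) (φ y) * pauli (f j) y x)
      (fun u => ∑ c, χ u * (starRingEnd ℂ) (χ c) *
        ∏ l : {l // l ≠ j}, pauli (f l.1) (c l) (u l))]
  intro r
  rw [aux_sum_split_fac j _ (fun y => φ (r j) * (starRingEnd ℂ) (φ y) * pauli (f j) y (r j))
      (fun v => χ (fun l => r l.1) * (starRingEnd ℂ) (χ v) *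
        ∏ l : {l // l ≠ j}, pauli (f l.1) (v l) (r l.1))]
  intro c
  rw [hprod r, hprod c, aux_prod_split j (fun m => pauli (f m) (c m) (r m))]
  simp only [_root_.map_mul]
  ring

/-- If a pure 4-qubit state is a product across a 1-versus-3
bipartition `{j} | {j}ᶜ` (up to reordering of factors), then for every pair
`A ⊂ {1,2,3,4}` the `A`-matricization of the full correlation tensor satisfies
`‖T_{A̲}‖_k ≤ 2√k` for `k ≤ 3` and `‖T_{A̲}‖_k ≤ 2√3` for `4 ≤ k ≤ 9`. -/
theorem one_vs_three_product_four_qubit_matricization_bound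
    (j : Fin 4) (φ : Fin 2 → ℂ) (χ : ({l // l ≠ j} → Fin 2) → ℂ)
    (hφ : ∑ x, Complex.normSq (φ x) = 1)
    (hχ : ∑ x, Complex.normSq (χ x) = 1)
    (Ψ : (Fin 4 → Fin 2) → ℂ)
    (hprod : ∀ r, Ψ r = φ (r j) * χ (fun l => r l.1))
    (ρ : Matrix (Fin 4 → Fin 2) (Fin 4 → Fin 2) ℂ)
    (hρ : ρ = Matrix.vecMulVec Ψ (star Ψ)) :
    ∀ A : Finset (Fin 4), A.card = 2 →
      ∀ k : ℕ, 1 ≤ k → k ≤ 9 →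
        (k ≤ 3 → kyFanNorm k (matricize A (corr ρ)) ≤ 2 * Real.sqrt k) ∧
        (4 ≤ k → kyFanNorm k (matricize A (corr ρ)) ≤ 2 * Real.sqrt 3) := by
  -- Bloch vector of φ and correlation tensor of χ
  set aB : Fin 3 → ℝ :=
    fun i => (∑ x, ∑ y, φ x * (starRingEnd ℂ) (φ y) * pauli i y x).re with haB
  set SB : ({l // l ≠ j} → Fin 3) → ℝ := fun g =>
    (∑ r, ∑ c, χ r * (starRingEnd ℂ) (χ c) * ∏ l, pauli (g l) (c l) (r l)).re with hSB
  have him1 : ∀ i : Fin 3, (∑ x, ∑ y, φ x * (starRingEnd ℂ) (φ y) * pauli i y x).im = 0 := by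
    intro i
    apply Complex.conj_eq_iff_im.mp
    simp only [map_sum, _root_.map_mul, Complex.conj_conj, aux_pauli_conj]
    rw [Finset.sum_comm]
    exact Finset.sum_congr rfl fun x _ => Finset.sum_congr rfl fun y _ => by ring
  have him2 : ∀ g : ({l // l ≠ j} → Fin 3),
      (∑ r, ∑ c, χ r * (starRingEnd ℂ) (χ c) * ∏ l, pauli (g l) (c l) (r l)).im = 0 := by
    intro g
    apply Complex.conj_eq_iff_im.mp
    simp only [map_sum, _root_.map_mul, map_prod, Complex.conj_conj, aux_pauli_conj]
    rw [Finset.sum_comm]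
    exact Finset.sum_congr rfl fun r _ => Finset.sum_congr rfl fun c _ => by ring
  have hfac : ∀ f : Fin 4 → Fin 3, corr ρ f = aB (f j) * SB (fun l => f l.1) := by
    intro f
    rw [aux_corr_fac j φ χ Ψ hprod ρ hρ f, Complex.mul_re, him1 (f j), him2 (fun l => f l.1)]
    simp [haB, hSB]
  have hsuma : ∑ i, aB i ^ 2 = 1 := aux_key2 φ hφ
  -- transport χ to Fin 3 indexing
  have hcard : Fintype.card {l // l ≠ j} = 3 := by
    rw [Fintype.card_subtype, Finset.filter_ne', Finset.card_erase_of_mem (Finset.mem_univ j)]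
    simp
  set e : Fin 3 ≃ {l // l ≠ j} := (Fintype.equivFinOfCardEq hcard).symm with he
  set χ₀ : (Fin 3 → Fin 2) → ℂ := fun v => χ (fun l => v (e.symm l)) with hχ₀
  have hχ0norm : ∑ v, Complex.normSq (χ₀ v) = 1 := by
    rw [← hχ]
    refine Fintype.sum_equiv (Equiv.arrowCongr e.symm (Equiv.refl (Fin 2))).symm
      (fun v => Complex.normSq (χ₀ v)) (fun x => Complex.normSq (χ x)) fun v => ?_
    simp only [hχ₀]
    congr 1
  have hSBg : ∀ g : {l // l ≠ j} → Fin 3, SB g =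
      (∑ r', ∑ c', χ₀ r' * (starRingEnd ℂ) (χ₀ c') *
        ∏ t, pauli (g (e t)) (c' t) (r' t)).re := by
    intro g
    simp only [hSB]
    congr 1
    refine Fintype.sum_equiv (Equiv.arrowCongr e.symm (Equiv.refl (Fin 2))) _ _ fun r => ?_
    refine Fintype.sum_equiv (Equiv.arrowCongr e.symm (Equiv.refl (Fin 2))) _ _ fun c => ?_
    have h1 : χ₀ ((Equiv.arrowCongr e.symm (Equiv.refl (Fin 2))) r) = χ r := by
      simp only [hχ₀]; congr 1; funext l
      simp
    have h2 : χ₀ ((Equiv.arrowCongr e.symm (Equiv.refl (Fin 2))) c) = χ c := by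
      simp only [hχ₀]; congr 1; funext l
      simp
    have h3 : ∏ t, pauli (g (e t)) (((Equiv.arrowCongr e.symm (Equiv.refl (Fin 2))) c) t)
          (((Equiv.arrowCongr e.symm (Equiv.refl (Fin 2))) r) t)
        = ∏ l, pauli (g l) (c l) (r l) := by
      refine Fintype.prod_equiv e _ _ fun t => ?_
      simp
    rw [h1, h2, h3]
  have hsumS : ∑ g, SB g ^ 2 ≤ 4 := by
    have htr : ∑ g, SB g ^ 2 = ∑ g' : Fin 3 → Fin 3,
        (∑ r, ∑ c, χ₀ r * (starRingEnd ℂ) (χ₀ c) * ∏ t, pauli (g' t) (c t) (r t)).re ^ 2 := by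
      refine Fintype.sum_equiv (Equiv.arrowCongr e.symm (Equiv.refl (Fin 3))) _ _ fun g => ?_
      rw [hSBg g]
      simp
    rw [htr]
    exact aux_key8' χ₀ hχ0norm
  have hsumcorr : ∑ f : Fin 4 → Fin 3, corr ρ f ^ 2 ≤ 4 := by
    rw [aux_sum_split_fac (β := Fin 3) j (fun f => corr ρ f ^ 2)
      (fun x => aB x ^ 2) (fun g => SB g ^ 2) (fun f => by simp only [hfac f, mul_pow]),
      hsuma, one_mul]
    exact hsumS
  intro A hA
  have hrank : (matricize A (corr ρ)).rank ≤ 3 := by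
    by_cases hj : j ∈ A
    · set P : Matrix ({m // m ∈ A} → Fin 3) ({m // m ∈ A.erase j} → Fin 3) ℝ :=
        Matrix.of (fun r i => if (fun m : {m // m ∈ A.erase j} =>
            r ⟨m.1, Finset.mem_of_mem_erase m.2⟩) = i then aB (r ⟨j, hj⟩) else 0) with hP
      set Q : Matrix ({m // m ∈ A.erase j} → Fin 3) ({m // m ∉ A} → Fin 3) ℝ :=
        Matrix.of (fun i c => SB (fun l => if h : l.1 ∈ A.erase j then i ⟨l.1, h⟩ else
          c ⟨l.1, fun hmem => h (Finset.mem_erase.mpr ⟨l.2, hmem⟩)⟩)) with hQ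
      have hPQ : matricize A (corr ρ) = P * Q := by
        funext r c
        rw [Matrix.mul_apply]
        unfold matricize
        rw [hfac]
        simp only [hP, hQ, Matrix.of_apply, ite_mul, zero_mul, Finset.sum_ite_eq,
          Finset.mem_univ, if_true]
        rw [dif_pos hj]
        congr 1
        refine congrArg SB (funext fun l => ?_)
        by_cases hm : l.1 ∈ A
        · rw [dif_pos hm, dif_pos (Finset.mem_erase.mpr ⟨l.2, hm⟩)]
        · rw [dif_neg hm, dif_neg (fun hc => hm (Finset.mem_of_mem_erase hc))]
      have hcardm : Fintype.card ({m // m ∈ A.erase j} → Fin 3) = 3 := by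
        rw [Fintype.card_fun, Fintype.card_coe, Finset.card_erase_of_mem hj, hA]
        rfl
      rw [hPQ]
      calc (P * Q).rank ≤ P.rank := le_trans (Matrix.rank_mul_le P Q) inf_le_left
        _ ≤ Fintype.card ({m // m ∈ A.erase j} → Fin 3) := Matrix.rank_le_card_width P
        _ = 3 := hcardm
    · set P : Matrix ({m // m ∈ A} → Fin 3) ({m // m ∈ Aᶜ.erase j} → Fin 3) ℝ :=
        Matrix.of (fun r i => SB (fun l => if h : l.1 ∈ A then r ⟨l.1, h⟩ else
          i ⟨l.1, Finset.mem_erase.mpr ⟨l.2, Finset.mem_compl.mpr h⟩⟩)) with hP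
      set Q : Matrix ({m // m ∈ Aᶜ.erase j} → Fin 3) ({m // m ∉ A} → Fin 3) ℝ :=
        Matrix.of (fun i c => if (fun m : {m // m ∈ Aᶜ.erase j} =>
            c ⟨m.1, Finset.mem_compl.mp (Finset.mem_of_mem_erase m.2)⟩) = i
          then aB (c ⟨j, hj⟩) else 0) with hQ
      have hPQ : matricize A (corr ρ) = P * Q := by
        funext r c
        rw [Matrix.mul_apply]
        unfold matricize
        rw [hfac]
        simp only [hP, hQ, Matrix.of_apply, mul_ite, mul_zero, Finset.sum_ite_eq,
          Finset.mem_univ, if_true]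
        rw [dif_neg hj, mul_comm]
      have hcardm : Fintype.card ({m // m ∈ Aᶜ.erase j} → Fin 3) = 3 := by
        rw [Fintype.card_fun, Fintype.card_coe,
          Finset.card_erase_of_mem (Finset.mem_compl.mpr hj), Finset.card_compl, hA]
        rfl
      rw [hPQ]
      calc (P * Q).rank ≤ P.rank := le_trans (Matrix.rank_mul_le P Q) inf_le_left
        _ ≤ Fintype.card ({m // m ∈ Aᶜ.erase j} → Fin 3) := Matrix.rank_le_card_width P
        _ = 3 := hcardm
  set Mx := matricize A (corr ρ) with hMx
  have hfrob : ∑ c, ∑ r, Mx r c ^ 2 ≤ 4 := by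
    have heq : ∑ f : Fin 4 → Fin 3, corr ρ f ^ 2 = ∑ c, ∑ r, Mx r c ^ 2 := by
      rw [Fintype.sum_equiv (Equiv.piEquivPiSubtypeProd (· ∈ A) (fun _ => Fin 3))
        (fun f => corr ρ f ^ 2) (fun p => Mx p.1 p.2 ^ 2) ?_]
      · rw [Fintype.sum_prod_type]
        exact Finset.sum_comm
      · intro f
        show corr ρ f ^ 2 = corr ρ (fun m => if h : m ∈ A then f m else f m) ^ 2
        congr 1
        exact congrArg (corr ρ) (funext fun m => by split_ifs <;> rfl)
    rw [← heq]
    exact hsumcorr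
  have hnn : ∀ c, 0 ≤ (Matrix.posSemidef_conjTranspose_mul_self Mx).1.eigenvalues c :=
    fun c => (Matrix.posSemidef_conjTranspose_mul_self Mx).eigenvalues_nonneg c
  have hsumev : ∑ c, (Matrix.posSemidef_conjTranspose_mul_self Mx).1.eigenvalues c ≤ 4 := by
    have h1 := aux_trace_eq_sum_eigenvalues (Matrix.posSemidef_conjTranspose_mul_self Mx).1
    have h2 : (Mxᴴ * Mx).trace = ∑ c, ∑ r, Mx r c ^ 2 := by
      simp [Matrix.trace, Matrix.diag, Matrix.mul_apply, Matrix.conjTranspose_apply, sq]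
    rw [← h1, h2]
    exact hfrob
  have hcard3 : (Finset.univ.filter fun c =>
      (Matrix.posSemidef_conjTranspose_mul_self Mx).1.eigenvalues c ≠ 0).card ≤ 3 := by
    rw [← Fintype.card_subtype,
      ← (Matrix.posSemidef_conjTranspose_mul_self Mx).1.rank_eq_card_non_zero_eigs,
      Matrix.rank_conjTranspose_mul_self]
    exact hrank
  have hmain : ∀ (s : Finset ({l // l ∉ A} → Fin 3)) (n : ℕ),
      (s.filter fun c =>
        (Matrix.posSemidef_conjTranspose_mul_self Mx).1.eigenvalues c ≠ 0).card ≤ n →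
      ∑ c ∈ s, singVals Mx c ≤ 2 * Real.sqrt n := by
    intro s n htn
    have hts : ∑ c ∈ s, singVals Mx c = ∑ c ∈ s.filter (fun c =>
        (Matrix.posSemidef_conjTranspose_mul_self Mx).1.eigenvalues c ≠ 0), singVals Mx c := by
      rw [Finset.sum_filter_of_ne]
      intro x _ hne
      intro h0
      apply hne
      unfold singVals
      rw [h0, Real.sqrt_zero]
    rw [hts]
    set t := s.filter (fun c =>
      (Matrix.posSemidef_conjTranspose_mul_self Mx).1.eigenvalues c ≠ 0) with ht
    have hCS : (∑ c ∈ t, singVals Mx c) ^ 2 ≤ t.card * ∑ c ∈ t,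
        (Matrix.posSemidef_conjTranspose_mul_self Mx).1.eigenvalues c := by
      refine le_trans (sq_sum_le_card_mul_sum_sq) ?_
      refine le_of_eq ?_
      congr 1
      refine Finset.sum_congr rfl fun c _ => ?_
      unfold singVals
      rw [Real.sq_sqrt (hnn c)]
    have hsum_le : ∑ c ∈ t, (Matrix.posSemidef_conjTranspose_mul_self Mx).1.eigenvalues c ≤ 4 :=
      le_trans (Finset.sum_le_sum_of_subset_of_nonneg (Finset.subset_univ t)
        (fun i _ _ => hnn i)) hsumev
    have hnonneg : 0 ≤ ∑ c ∈ t, singVals Mx c :=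
      Finset.sum_nonneg fun c _ => Real.sqrt_nonneg _
    have htcast : (t.card : ℝ) ≤ n := by exact_mod_cast htn
    have h4 : (∑ c ∈ t, singVals Mx c) ^ 2 ≤ (n : ℝ) * 4 := by
      refine le_trans hCS ?_
      have h0 : 0 ≤ ∑ c ∈ t, (Matrix.posSemidef_conjTranspose_mul_self Mx).1.eigenvalues c :=
        Finset.sum_nonneg fun c _ => hnn c
      nlinarith
    nlinarith [Real.sqrt_nonneg (n : ℝ), Real.sq_sqrt (show (0:ℝ) ≤ n from Nat.cast_nonneg n)]
  intro k _ _
  have hky : ∀ n : ℕ, (∀ s : Finset ({l // l ∉ A} → Fin 3), s.card = k →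
      (s.filter fun c =>
        (Matrix.posSemidef_conjTranspose_mul_self Mx).1.eigenvalues c ≠ 0).card ≤ n) →
      kyFanNorm k Mx ≤ 2 * Real.sqrt n := by
    intro n hsn
    apply Finset.sup'_le
    intro s _
    by_cases hsk : s.card = k
    · rw [if_pos hsk]
      exact hmain s n (hsn s hsk)
    · rw [if_neg hsk]
      positivity
  constructor
  · intro _
    refine le_trans (hky k fun s hsk => ?_) (le_of_eq rfl)
    calc (s.filter fun c =>
        (Matrix.posSemidef_conjTranspose_mul_self Mx).1.eigenvalues c ≠ 0).card
        ≤ s.card := Finset.card_filter_le _ _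
      _ = k := hsk
  · intro _
    refine le_trans (hky 3 fun s hsk => ?_) (by norm_num)
    exact le_trans (Finset.card_le_card (Finset.filter_subset_filter _ (Finset.subset_univ s)))
      hcard3
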